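/- For every real number b ≥ 0 and every complex number s with 0 < Re(s) < 1, one has ∫₀^∞ cos(b·u) · (cosh(u) − 1)^{−s/2} du = (cosh(π b) / cos(π s/2)) · 2^{s/2 − 1} · Γ(s/2 + i b) · Γ(s/2 − i b) / Γ(s). -/

import Mathlib

open MeasureTheory Complex

lemma cpow_pos_eq {r : ℝ} (hr : 0 < r) (w : ℂ) :
    (r : ℂ) ^ w = Complex.exp ((Real.log r : ℂ) * w) := by
  rw [Complex.cpow_def_of_ne_zero (by exact_mod_cast hr.ne'), Complex.ofReal_log hr.le]

lemma twoCosAux (z : ℂ) : Complex.exp (z * I) + Complex.exp (-z * I) = 2 * Complex.cos z := by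
  rw [Complex.cos]; ring

lemma pointwise_eq (s : ℂ) (b u : ℝ) (hu : 0 < u) :
    Real.exp (-u) • ((2:ℂ)^(s/2-1) *
        (((Real.exp (-u) : ℝ) : ℂ)^(s/2 + I*b - 1) + ((Real.exp (-u) : ℝ) : ℂ)^(s/2 - I*b - 1)) *
        ((1 : ℂ) - ((Real.exp (-u) : ℝ) : ℂ))^(-s))
      = (Real.cos (b*u) : ℂ) * ((Real.cosh u - 1 : ℝ) : ℂ) ^ (-(s/2)) := by
  set x := Real.exp (-u) with hxdef
  have hx : 0 < x := Real.exp_pos _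
  have hx1 : x < 1 := by rw [hxdef, Real.exp_lt_one_iff]; linarith
  have h1x : 0 < 1 - x := by linarith
  have hch : Real.cosh u - 1 = (1-x)^2 * Real.exp u / 2 := by
    rw [Real.cosh_eq, hxdef, Real.exp_neg]
    have h := Real.exp_ne_zero u
    field_simp; ring
  have hchpos : 0 < Real.cosh u - 1 := by
    rw [hch]; positivity
  have hL : Real.log (Real.cosh u - 1) = 2*Real.log (1-x) + u - Real.log 2 := by
    rw [hch, Real.log_div (by positivity) (by norm_num), Real.log_mul (by positivity)
      (Real.exp_ne_zero u), Real.log_pow, Real.log_exp]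
    push_cast; ring
  have hxw : ∀ w : ℂ, ((x : ℝ) : ℂ)^w = Complex.exp ((-u : ℂ) * w) := by
    intro w
    rw [cpow_pos_eq hx, hxdef, Real.log_exp]
    push_cast; ring_nf
  have h1xc : (1 : ℂ) - ((x : ℝ) : ℂ) = ((1 - x : ℝ) : ℂ) := by push_cast; ring
  have h2pow : (2:ℂ)^(s/2-1) = Complex.exp (((Real.log 2 : ℝ) : ℂ) * (s/2-1)) := by
    rw [show (2:ℂ) = ((2:ℝ) : ℂ) by norm_num, cpow_pos_eq (by norm_num : (0:ℝ) < 2)]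
  have h2exp : (2 : ℂ) = Complex.exp ((Real.log 2 : ℝ) : ℂ) := by
    rw [← Complex.ofReal_exp, Real.exp_log (by norm_num)]; norm_num
  rw [Complex.real_smul, hxw, hxw, h1xc, cpow_pos_eq h1x, cpow_pos_eq hchpos, h2pow]
  rw [show (-u : ℂ) * (s/2 + I*b - 1) = -((b:ℂ)*(u:ℂ)) * I + (-u : ℂ)*(s/2-1) by push_cast; ring,
    show (-u : ℂ) * (s/2 - I*b - 1) = ((b:ℂ)*(u:ℂ)) * I + (-u : ℂ)*(s/2-1) by push_cast; ring,
    Complex.exp_add, Complex.exp_add]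
  have hcos : Complex.exp (((b:ℂ)*(u:ℂ)) * I) + Complex.exp (-((b:ℂ)*(u:ℂ)) * I)
      = 2 * Complex.cos ((b:ℂ)*(u:ℂ)) := twoCosAux _
  have hcosr : ((Real.cos (b*u) : ℝ) : ℂ) = Complex.cos ((b:ℂ)*(u:ℂ)) := by
    rw [Complex.ofReal_cos]; push_cast; ring_nf
  rw [hcosr]
  have hxc : ((x : ℝ) : ℂ) = Complex.exp (-(u:ℂ)) := by
    rw [Complex.ofReal_exp]; norm_num
  rw [hxc]
  calc _
      = Complex.cos ((b:ℂ)*(u:ℂ)) * (2 * (Complex.exp (-(u:ℂ)) *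
          Complex.exp ((Real.log 2 : ℝ) * (s/2-1)) * Complex.exp ((-u : ℂ)*(s/2-1)) *
          Complex.exp ((Real.log (1-x) : ℝ) * (-s)))) := by
        linear_combination (Complex.exp (-(u:ℂ)) * Complex.exp (((Real.log 2 : ℝ) : ℂ) * (s/2-1)) *
          Complex.exp ((-(u:ℂ))*(s/2-1)) * Complex.exp (((Real.log (1-x) : ℝ) : ℂ) * (-s))) * hcos
    _ = Complex.cos ((b:ℂ)*(u:ℂ)) * Complex.exp (((Real.log (Real.cosh u - 1) : ℝ) : ℂ) * (-(s/2))) := by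
        have hF : ((Real.log (Real.cosh u - 1) : ℝ) : ℂ) * (-(s/2))
            = ((Real.log 2 : ℝ) : ℂ) + ((-(u:ℂ)) + (((Real.log 2 : ℝ) : ℂ)*(s/2-1) +
              ((-(u:ℂ))*(s/2-1) + ((Real.log (1-x) : ℝ) : ℂ) * (-s)))) := by
          rw [hL]; push_cast; ring
        rw [hF, Complex.exp_add, Complex.exp_add, Complex.exp_add, Complex.exp_add, ← h2exp]
        ring

lemma img_exp_neg : (fun u : ℝ => Real.exp (-u)) '' Set.Ioi 0 = Set.Ioo (0:ℝ) 1 := by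
  ext y
  constructor
  · rintro ⟨u, hu, rfl⟩
    exact ⟨Real.exp_pos _, by
      rw [Real.exp_lt_one_iff]; simpa using (Set.mem_Ioi.mp hu)⟩
  · rintro ⟨h0, h1⟩
    refine ⟨-Real.log y, ?_, by simp [Real.exp_log h0]⟩
    simp only [Set.mem_Ioi]
    linarith [Real.log_neg h0 h1]

lemma subst_step (g : ℝ → ℂ) :
    ∫ x in Set.Ioo (0:ℝ) 1, g x
      = ∫ u in Set.Ioi (0:ℝ), Real.exp (-u) • g (Real.exp (-u)) := by
  rw [← img_exp_neg,
    integral_image_eq_integral_abs_deriv_smul measurableSet_Ioi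
      (f' := fun u => -Real.exp (-u))
      (fun x _ => by
        simpa [Function.comp_def] using ((Real.hasDerivAt_exp (-x)).comp x ((hasDerivAt_neg x))).hasDerivWithinAt)
      (fun a _ b _ hab => by
        have := Real.exp_injective hab; linarith) g]
  refine setIntegral_congr_fun measurableSet_Ioi fun u _ => ?_
  rw [abs_neg, abs_of_pos (Real.exp_pos _)]

lemma beta_sum (s : ℂ) (b : ℝ) (hs0 : 0 < s.re) (hs1 : s.re < 1) :
    ∫ x in Set.Ioo (0:ℝ) 1,
      ((2:ℂ)^(s/2-1) * (((x:ℝ):ℂ)^(s/2 + I*b - 1) + ((x:ℝ):ℂ)^(s/2 - I*b - 1)) *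
        ((1:ℂ) - ((x:ℝ):ℂ))^(-s))
    = (2:ℂ)^(s/2-1) *
        (Complex.betaIntegral (s/2 + I*b) (1-s) + Complex.betaIntegral (s/2 - I*b) (1-s)) := by
  have hreP : 0 < (s/2 + I*(b:ℂ)).re := by
    simp [Complex.add_re, Complex.div_ofNat_re, Complex.mul_re]; linarith
  have hreM : 0 < (s/2 - I*(b:ℂ)).re := by
    simp [Complex.sub_re, Complex.div_ofNat_re, Complex.mul_re]; linarith
  have hrev : 0 < ((1:ℂ)-s).re := by simp [Complex.sub_re]; linarith
  have hintP : IntegrableOn (fun x : ℝ => ((x:ℝ):ℂ)^(s/2 + I*b - 1) * ((1:ℂ) - ((x:ℝ):ℂ))^((1-s) - 1))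
      (Set.Ioo 0 1) := by
    exact ((intervalIntegrable_iff_integrableOn_Ioc_of_le (by norm_num)).mp
      (Complex.betaIntegral_convergent hreP hrev)).mono_set Set.Ioo_subset_Ioc_self
  have hintM : IntegrableOn (fun x : ℝ => ((x:ℝ):ℂ)^(s/2 - I*b - 1) * ((1:ℂ) - ((x:ℝ):ℂ))^((1-s) - 1))
      (Set.Ioo 0 1) := by
    exact ((intervalIntegrable_iff_integrableOn_Ioc_of_le (by norm_num)).mp
      (Complex.betaIntegral_convergent hreM hrev)).mono_set Set.Ioo_subset_Ioc_self
  have hs1s : (1:ℂ) - s - 1 = -s := by ring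
  calc ∫ x in Set.Ioo (0:ℝ) 1,
        ((2:ℂ)^(s/2-1) * (((x:ℝ):ℂ)^(s/2 + I*b - 1) + ((x:ℝ):ℂ)^(s/2 - I*b - 1)) *
          ((1:ℂ) - ((x:ℝ):ℂ))^(-s))
      = ∫ x in Set.Ioo (0:ℝ) 1,
          (2:ℂ)^(s/2-1) * (((x:ℝ):ℂ)^(s/2 + I*b - 1) * ((1:ℂ) - ((x:ℝ):ℂ))^((1-s)-1)
            + ((x:ℝ):ℂ)^(s/2 - I*b - 1) * ((1:ℂ) - ((x:ℝ):ℂ))^((1-s)-1)) := by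
        refine setIntegral_congr_fun measurableSet_Ioo fun x hx => ?_
        rw [hs1s]; ring
    _ = (2:ℂ)^(s/2-1) * ∫ x in Set.Ioo (0:ℝ) 1,
          (((x:ℝ):ℂ)^(s/2 + I*b - 1) * ((1:ℂ) - ((x:ℝ):ℂ))^((1-s)-1)
            + ((x:ℝ):ℂ)^(s/2 - I*b - 1) * ((1:ℂ) - ((x:ℝ):ℂ))^((1-s)-1)) := by
        rw [integral_const_mul]
    _ = (2:ℂ)^(s/2-1) *
        (Complex.betaIntegral (s/2 + I*b) (1-s) + Complex.betaIntegral (s/2 - I*b) (1-s)) := by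
        have hbP : Complex.betaIntegral (s/2 + I*b) (1-s)
            = ∫ x in Set.Ioo (0:ℝ) 1, ((x:ℝ):ℂ)^(s/2+I*b-1) * ((1:ℂ)-((x:ℝ):ℂ))^((1-s)-1) := by
          rw [Complex.betaIntegral, intervalIntegral.integral_of_le (by norm_num : (0:ℝ) ≤ 1),
            integral_Ioc_eq_integral_Ioo]
        have hbM : Complex.betaIntegral (s/2 - I*b) (1-s)
            = ∫ x in Set.Ioo (0:ℝ) 1, ((x:ℝ):ℂ)^(s/2-I*b-1) * ((1:ℂ)-((x:ℝ):ℂ))^((1-s)-1) := by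
          rw [Complex.betaIntegral, intervalIntegral.integral_of_le (by norm_num : (0:ℝ) ≤ 1),
            integral_Ioc_eq_integral_Ioo]
        rw [integral_add hintP hintM, hbP, hbM]

lemma gamma_algebra (s : ℂ) (b : ℝ) (hs0 : 0 < s.re) (hs1 : s.re < 1) :
    Complex.betaIntegral (s/2 + I*b) (1-s) + Complex.betaIntegral (s/2 - I*b) (1-s)
      = ((Real.cosh (Real.pi * b) : ℝ) : ℂ) / Complex.cos ((Real.pi : ℂ) * s / 2) *
          (Complex.Gamma (s/2 + I*b) * Complex.Gamma (s/2 - I*b) / Complex.Gamma s) := by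
  have hreP : 0 < (s/2 + I*(b:ℂ)).re := by
    simp [Complex.add_re, Complex.div_ofNat_re, Complex.mul_re]; linarith
  have hreM : 0 < (s/2 - I*(b:ℂ)).re := by
    simp [Complex.sub_re, Complex.div_ofNat_re, Complex.mul_re]; linarith
  have hrev : 0 < ((1:ℂ)-s).re := by simp [Complex.sub_re]; linarith
  have hreA : 0 < (s/2 + I*(b:ℂ) + (1-s)).re := by
    simp [Complex.add_re, Complex.sub_re, Complex.div_ofNat_re, Complex.mul_re]; linarith
  have hreB : 0 < (s/2 - I*(b:ℂ) + (1-s)).re := by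
    simp [Complex.add_re, Complex.sub_re, Complex.div_ofNat_re, Complex.mul_re]; linarith
  have hGP : Complex.Gamma (s/2 + I*b) ≠ 0 := Complex.Gamma_ne_zero_of_re_pos hreP
  have hGM : Complex.Gamma (s/2 - I*b) ≠ 0 := Complex.Gamma_ne_zero_of_re_pos hreM
  have hGs : Complex.Gamma s ≠ 0 := Complex.Gamma_ne_zero_of_re_pos hs0
  have hGv : Complex.Gamma (1-s) ≠ 0 := Complex.Gamma_ne_zero_of_re_pos hrev
  have hGA : Complex.Gamma (s/2 + I*b + (1-s)) ≠ 0 := Complex.Gamma_ne_zero_of_re_pos hreA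
  have hGB : Complex.Gamma (s/2 - I*b + (1-s)) ≠ 0 := Complex.Gamma_ne_zero_of_re_pos hreB
  have hpi : ((Real.pi : ℝ) : ℂ) ≠ 0 := by
    exact_mod_cast Real.pi_ne_zero
  -- reflection formulas
  have reflM : Complex.Gamma (s/2 - I*b) * Complex.Gamma (s/2 + I*b + (1-s))
      = (Real.pi : ℂ) / Complex.sin ((Real.pi : ℂ) * (s/2 - I*b)) := by
    have h := Complex.Gamma_mul_Gamma_one_sub (s/2 - I*b)
    rwa [show (1:ℂ) - (s/2 - I*b) = s/2 + I*b + (1-s) by ring] at h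
  have reflP : Complex.Gamma (s/2 + I*b) * Complex.Gamma (s/2 - I*b + (1-s))
      = (Real.pi : ℂ) / Complex.sin ((Real.pi : ℂ) * (s/2 + I*b)) := by
    have h := Complex.Gamma_mul_Gamma_one_sub (s/2 + I*b)
    rwa [show (1:ℂ) - (s/2 + I*b) = s/2 - I*b + (1-s) by ring] at h
  have refls : Complex.Gamma s * Complex.Gamma (1-s)
      = (Real.pi : ℂ) / Complex.sin ((Real.pi : ℂ) * s) :=
    Complex.Gamma_mul_Gamma_one_sub s
  -- nonvanishing of the sines
  have hSM : Complex.sin ((Real.pi : ℂ) * (s/2 - I*b)) ≠ 0 := by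
    intro h; rw [h, div_zero] at reflM; exact (mul_ne_zero hGM hGA) reflM
  have hSP : Complex.sin ((Real.pi : ℂ) * (s/2 + I*b)) ≠ 0 := by
    intro h; rw [h, div_zero] at reflP; exact (mul_ne_zero hGP hGB) reflP
  have hSs : Complex.sin ((Real.pi : ℂ) * s) ≠ 0 := by
    intro h; rw [h, div_zero] at refls; exact (mul_ne_zero hGs hGv) refls
  -- trig identities
  have hsum : Complex.sin ((Real.pi : ℂ) * (s/2 + I*b)) + Complex.sin ((Real.pi : ℂ) * (s/2 - I*b))
      = 2 * Complex.sin ((Real.pi : ℂ) * (s/2)) * ((Real.cosh (Real.pi * b) : ℝ) : ℂ) := by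
    rw [show (Real.pi : ℂ) * (s/2 + I*b) = (Real.pi : ℂ) * (s/2) + ((Real.pi * b : ℝ) : ℂ) * I by
        push_cast; ring,
      show (Real.pi : ℂ) * (s/2 - I*b) = (Real.pi : ℂ) * (s/2) - ((Real.pi * b : ℝ) : ℂ) * I by
        push_cast; ring,
      Complex.sin_add, Complex.sin_sub, Complex.cos_mul_I, Complex.ofReal_cosh]
    ring
  have hsin2 : Complex.sin ((Real.pi : ℂ) * s)
      = 2 * Complex.sin ((Real.pi : ℂ) * (s/2)) * Complex.cos ((Real.pi : ℂ) * (s/2)) := by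
    rw [show (Real.pi : ℂ) * s = 2 * ((Real.pi : ℂ) * (s/2)) by ring, Complex.sin_two_mul]
  have hC : Complex.cos ((Real.pi : ℂ) * (s/2)) ≠ 0 := by
    intro h; rw [h, mul_zero] at hsin2; exact hSs hsin2
  have hs2 : Complex.sin ((Real.pi : ℂ) * (s/2)) ≠ 0 := by
    intro h; rw [h] at hsin2; simp at hsin2; exact hSs hsin2
  -- division-free reflection formulas
  have reflM' : Complex.Gamma (s/2 - I*b) * Complex.Gamma (s/2 + I*b + (1-s)) *
      Complex.sin ((Real.pi : ℂ) * (s/2 - I*b)) = (Real.pi : ℂ) := by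
    rw [reflM, div_mul_cancel₀ _ hSM]
  have reflP' : Complex.Gamma (s/2 + I*b) * Complex.Gamma (s/2 - I*b + (1-s)) *
      Complex.sin ((Real.pi : ℂ) * (s/2 + I*b)) = (Real.pi : ℂ) := by
    rw [reflP, div_mul_cancel₀ _ hSP]
  have refls' : Complex.Gamma s * Complex.Gamma (1-s) * Complex.sin ((Real.pi : ℂ) * s)
      = (Real.pi : ℂ) := by
    rw [refls, div_mul_cancel₀ _ hSs]
  have hbetaP' := Complex.Gamma_mul_Gamma_eq_betaIntegral hreP hrev
  have hbetaM' := Complex.Gamma_mul_Gamma_eq_betaIntegral hreM hrev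
  have hcosarg : Complex.cos ((Real.pi : ℂ) * s / 2) = Complex.cos ((Real.pi : ℂ) * (s/2)) := by
    rw [mul_div_assoc]
  rw [hcosarg]
  have hrhs : ((Real.cosh (Real.pi * b) : ℝ) : ℂ) / Complex.cos ((Real.pi : ℂ) * (s/2)) *
      (Complex.Gamma (s/2 + I*b) * Complex.Gamma (s/2 - I*b) / Complex.Gamma s)
      = ((Real.cosh (Real.pi * b) : ℝ) : ℂ) * Complex.Gamma (s/2 + I*b) *
        Complex.Gamma (s/2 - I*b) / (Complex.cos ((Real.pi : ℂ) * (s/2)) * Complex.Gamma s) := by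
    ring
  rw [hrhs, eq_div_iff (mul_ne_zero hC hGs)]
  have main : (Real.pi : ℂ) * ((Complex.betaIntegral (s/2 + I*b) (1-s) +
        Complex.betaIntegral (s/2 - I*b) (1-s)) *
        (Complex.cos ((Real.pi : ℂ) * (s/2)) * Complex.Gamma s))
      = (Real.pi : ℂ) * (((Real.cosh (Real.pi * b) : ℝ) : ℂ) * Complex.Gamma (s/2 + I*b) *
        Complex.Gamma (s/2 - I*b)) := by
    linear_combination
      (Complex.Gamma (s/2 + I*b) * Complex.Gamma (s/2 - I*b) *
        ((Real.cosh (Real.pi * b) : ℝ) : ℂ)) * refls'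
      - (Complex.Gamma (s/2 + I*b) * Complex.Gamma (s/2 - I*b) *
        ((Real.cosh (Real.pi * b) : ℝ) : ℂ) * Complex.Gamma (1-s) * Complex.Gamma s) * hsin2
      + (Complex.cos ((Real.pi : ℂ) * (s/2)) * Complex.Gamma s * Complex.Gamma (s/2 + I*b) *
        Complex.Gamma (s/2 - I*b) * Complex.Gamma (1-s)) * hsum
      - (Complex.cos ((Real.pi : ℂ) * (s/2)) * Complex.Gamma s * Complex.Gamma (s/2 - I*b) *
        Complex.sin ((Real.pi : ℂ) * (s/2 - I*b))) * hbetaP'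
      - (Complex.cos ((Real.pi : ℂ) * (s/2)) * Complex.Gamma s *
        Complex.betaIntegral (s/2 + I*b) (1-s)) * reflM'
      - (Complex.cos ((Real.pi : ℂ) * (s/2)) * Complex.Gamma s * Complex.Gamma (s/2 + I*b) *
        Complex.sin ((Real.pi : ℂ) * (s/2 + I*b))) * hbetaM'
      - (Complex.cos ((Real.pi : ℂ) * (s/2)) * Complex.Gamma s *
        Complex.betaIntegral (s/2 - I*b) (1-s)) * reflP'
  exact mul_left_cancel₀ hpi main

/-- Closed-form evaluation of `∫₀^∞ cos(bu)(cosh u − 1)^{-s/2} du` for `b ≥ 0`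
and `0 < Re s < 1`. -/
theorem cosh_minus_one_integral_eval (b : ℝ) (hb : 0 ≤ b) (s : ℂ)
    (hs0 : 0 < s.re) (hs1 : s.re < 1) :
    ∫ u in Set.Ioi (0:ℝ),
      (Real.cos (b * u) : ℂ) * ((Real.cosh u - 1 : ℝ) : ℂ) ^ (-(s / 2)) =
      ((Real.cosh (Real.pi * b) : ℂ) / Complex.cos ((Real.pi : ℂ) * s / 2)) *
        ((2 : ℂ) ^ (s / 2 - 1) * Complex.Gamma (s / 2 + I * b) *
          Complex.Gamma (s / 2 - I * b) / Complex.Gamma s) := by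
  calc ∫ u in Set.Ioi (0:ℝ),
        (Real.cos (b * u) : ℂ) * ((Real.cosh u - 1 : ℝ) : ℂ) ^ (-(s / 2))
      = ∫ u in Set.Ioi (0:ℝ), Real.exp (-u) •
          ((2:ℂ)^(s/2-1) *
            (((Real.exp (-u) : ℝ) : ℂ)^(s/2 + I*b - 1) + ((Real.exp (-u) : ℝ) : ℂ)^(s/2 - I*b - 1)) *
            ((1 : ℂ) - ((Real.exp (-u) : ℝ) : ℂ))^(-s)) := by
        refine setIntegral_congr_fun measurableSet_Ioi fun u hu => ?_
        exact (pointwise_eq s b u hu).symm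
    _ = ∫ x in Set.Ioo (0:ℝ) 1,
          ((2:ℂ)^(s/2-1) * (((x:ℝ):ℂ)^(s/2 + I*b - 1) + ((x:ℝ):ℂ)^(s/2 - I*b - 1)) *
            ((1:ℂ) - ((x:ℝ):ℂ))^(-s)) :=
        (subst_step (fun x : ℝ => (2:ℂ)^(s/2-1) *
          (((x:ℝ):ℂ)^(s/2 + I*b - 1) + ((x:ℝ):ℂ)^(s/2 - I*b - 1)) *
          ((1:ℂ) - ((x:ℝ):ℂ))^(-s))).symm
    _ = (2:ℂ)^(s/2-1) *
          (Complex.betaIntegral (s/2 + I*b) (1-s) + Complex.betaIntegral (s/2 - I*b) (1-s)) :=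
        beta_sum s b hs0 hs1
    _ = ((Real.cosh (Real.pi * b) : ℂ) / Complex.cos ((Real.pi : ℂ) * s / 2)) *
        ((2 : ℂ) ^ (s / 2 - 1) * Complex.Gamma (s / 2 + I * b) *
          Complex.Gamma (s / 2 - I * b) / Complex.Gamma s) := by
        rw [gamma_algebra s b hs0 hs1]
        ring
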